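/- (Coproduct.) Let g = g₀ ⊕ g₁ be an elementary Lie algebra of order three over ℂ, U(g) its universal enveloping algebra with canonical map ι, and q ∈ ℂ a primitive cube root of unity. Suppose 𝒜 : ℤ/3ℤ → Submodule ℂ U(g) is a grading making U(g) a ℤ₃-graded algebra such that ι(x,0) ∈ 𝒜₀ for all x ∈ g₀ and ι(0,y) ∈ 𝒜₁ for all y ∈ g₁, and let • be the twisted product on U(g) ⊗_ℂ U(g) determined by (a⊗c) • (b⊗d) = q^{|b||c|} (ab) ⊗ (cd) for homogeneous b, c. Then there exists a unique ℂ-algebra homomorphism Δ : U(g) → (U(g) ⊗_ℂ U(g), •) such that Δ(ι z) = ι z ⊗ 1 + 1 ⊗ ι z for every z ∈ g₀ ⊕ g₁. -/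

import Mathlib

variable {g₀ g₁ : Type*} [LieRing g₀] [LieAlgebra ℂ g₀]
  [AddCommGroup g₁] [Module ℂ g₁] [LieRingModule g₀ g₁] [LieModule ℂ g₀ g₁]

/-- The relation on the tensor algebra `T(g₀ ⊕ g₁)` whose quotient is the
universal enveloping algebra of an elementary Lie algebra of order three
`g = g₀ ⊕ g₁` with ternary bracket `t`. -/
def envRel (t : g₁ →ₗ[ℂ] g₁ →ₗ[ℂ] g₁ →ₗ[ℂ] g₀) :
    TensorAlgebra ℂ (g₀ × g₁) → TensorAlgebra ℂ (g₀ × g₁) → Prop :=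
  fun a b =>
    (∃ x₁ x₂ : g₀,
      a = TensorAlgebra.ι ℂ ((x₁, 0) : g₀ × g₁) * TensorAlgebra.ι ℂ ((x₂, 0) : g₀ × g₁) ∧
      b = TensorAlgebra.ι ℂ ((x₂, 0) : g₀ × g₁) * TensorAlgebra.ι ℂ ((x₁, 0) : g₀ × g₁) +
        TensorAlgebra.ι ℂ ((⁅x₁, x₂⁆, 0) : g₀ × g₁)) ∨
    (∃ (x : g₀) (y : g₁),
      a = TensorAlgebra.ι ℂ ((x, 0) : g₀ × g₁) * TensorAlgebra.ι ℂ ((0, y) : g₀ × g₁) ∧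
      b = TensorAlgebra.ι ℂ ((0, y) : g₀ × g₁) * TensorAlgebra.ι ℂ ((x, 0) : g₀ × g₁) +
        TensorAlgebra.ι ℂ ((0, ⁅x, y⁆) : g₀ × g₁)) ∨
    (∃ y : Fin 3 → g₁,
      a = ∑ σ : Equiv.Perm (Fin 3),
        TensorAlgebra.ι ℂ ((0, y (σ 0)) : g₀ × g₁) *
        TensorAlgebra.ι ℂ ((0, y (σ 1)) : g₀ × g₁) *
        TensorAlgebra.ι ℂ ((0, y (σ 2)) : g₀ × g₁) ∧
      b = TensorAlgebra.ι ℂ ((t (y 0) (y 1) (y 2), 0) : g₀ × g₁))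

/-- The universal enveloping algebra `U(g)` of an elementary Lie algebra of
order three, as a quotient of the tensor algebra `T(g₀ ⊕ g₁)`. -/
def UEnv (t : g₁ →ₗ[ℂ] g₁ →ₗ[ℂ] g₁ →ₗ[ℂ] g₀) : Type _ := RingQuot (envRel t)

noncomputable instance (t : g₁ →ₗ[ℂ] g₁ →ₗ[ℂ] g₁ →ₗ[ℂ] g₀) : Ring (UEnv t) :=
  inferInstanceAs (Ring (RingQuot (envRel t)))

noncomputable instance (t : g₁ →ₗ[ℂ] g₁ →ₗ[ℂ] g₁ →ₗ[ℂ] g₀) : Algebra ℂ (UEnv t) :=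
  inferInstanceAs (Algebra ℂ (RingQuot (envRel t)))

/-- The canonical map `ι : g₀ ⊕ g₁ → U(g)`. -/
noncomputable def envι (t : g₁ →ₗ[ℂ] g₁ →ₗ[ℂ] g₁ →ₗ[ℂ] g₀) (z : g₀ × g₁) : UEnv t :=
  RingQuot.mkAlgHom ℂ (envRel t) (TensorAlgebra.ι ℂ z)

open TensorProduct

/-- The defining property of the twisted multiplication on `U(g) ⊗ U(g)`:
`(a⊗c) • (b⊗d) = q^{|b||c|} (ab) ⊗ (cd)` for homogeneous `b, c`. -/
def IsTwistedMul (t : g₁ →ₗ[ℂ] g₁ →ₗ[ℂ] g₁ →ₗ[ℂ] g₀)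
    (𝒜 : ZMod 3 → Submodule ℂ (UEnv t)) (q : ℂ)
    (m : (UEnv t ⊗[ℂ] UEnv t) →ₗ[ℂ] (UEnv t ⊗[ℂ] UEnv t) →ₗ[ℂ]
      (UEnv t ⊗[ℂ] UEnv t)) : Prop :=
  ∀ (a b c d : UEnv t) (j k : ZMod 3), b ∈ 𝒜 j → c ∈ 𝒜 k →
    m (a ⊗ₜ[ℂ] c) (b ⊗ₜ[ℂ] d) = q ^ (j.val * k.val) • ((a * b) ⊗ₜ[ℂ] (c * d))

section Auxiliary

lemma qpow_mod {q : ℂ} (hq3 : q ^ 3 = 1) (n : ℕ) : q ^ n = q ^ (n % 3) := by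
  conv_lhs => rw [← Nat.div_add_mod n 3]
  rw [pow_add, pow_mul, hq3, one_pow, one_mul]

lemma qpow_congr {q : ℂ} (hq3 : q ^ 3 = 1) {a b : ℕ} (h : a % 3 = b % 3) : q ^ a = q ^ b := by
  rw [qpow_mod hq3 a, h, ← qpow_mod hq3 b]

variable (t : g₁ →ₗ[ℂ] g₁ →ₗ[ℂ] g₁ →ₗ[ℂ] g₀)

lemma env_rel1 (x₁ x₂ : g₀) :
    envι t ((x₁, 0) : g₀ × g₁) * envι t ((x₂, 0) : g₀ × g₁) =
      envι t ((x₂, 0) : g₀ × g₁) * envι t ((x₁, 0) : g₀ × g₁) +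
        envι t ((⁅x₁, x₂⁆, 0) : g₀ × g₁) := by
  have h := RingQuot.mkAlgHom_rel ℂ (show envRel t _ _ from Or.inl ⟨x₁, x₂, rfl, rfl⟩)
  rw [map_mul, map_add, map_mul] at h
  exact h

lemma env_rel2 (x : g₀) (y : g₁) :
    envι t ((x, 0) : g₀ × g₁) * envι t ((0, y) : g₀ × g₁) =
      envι t ((0, y) : g₀ × g₁) * envι t ((x, 0) : g₀ × g₁) +
        envι t ((0, ⁅x, y⁆) : g₀ × g₁) := by
  have h := RingQuot.mkAlgHom_rel ℂ (show envRel t _ _ from Or.inr (Or.inl ⟨x, y, rfl, rfl⟩))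
  rw [map_mul, map_add, map_mul] at h
  exact h

lemma env_rel3 (y : Fin 3 → g₁) :
    (∑ σ : Equiv.Perm (Fin 3),
      envι t ((0, y (σ 0)) : g₀ × g₁) * envι t ((0, y (σ 1)) : g₀ × g₁) *
        envι t ((0, y (σ 2)) : g₀ × g₁)) =
      envι t ((t (y 0) (y 1) (y 2), 0) : g₀ × g₁) := by
  have h := RingQuot.mkAlgHom_rel ℂ (show envRel t _ _ from Or.inr (Or.inr ⟨y, rfl, rfl⟩))
  simp only [map_sum, map_mul] at h
  exact h

variable (q : ℂ) (𝒜 : ZMod 3 → Submodule ℂ (UEnv t)) [GradedAlgebra 𝒜]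
  (m : (UEnv t ⊗[ℂ] UEnv t) →ₗ[ℂ] (UEnv t ⊗[ℂ] UEnv t) →ₗ[ℂ] (UEnv t ⊗[ℂ] UEnv t))

lemma m_assoc (hm : IsTwistedMul t 𝒜 q m) (hq3 : q ^ 3 = 1)
    (u v w : UEnv t ⊗[ℂ] UEnv t) : m (m u v) w = m u (m v w) := by
  induction u using TensorProduct.induction_on with
  | zero => simp
  | add u₁ u₂ h₁ h₂ => simp only [map_add, LinearMap.add_apply, h₁, h₂]
  | tmul a c =>
  induction v using TensorProduct.induction_on with
  | zero => simp
  | add v₁ v₂ h₁ h₂ => simp only [map_add, LinearMap.add_apply, h₁, h₂]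
  | tmul b d =>
  induction w using TensorProduct.induction_on with
  | zero => simp
  | add w₁ w₂ h₁ h₂ => simp only [map_add, h₁, h₂]
  | tmul e f =>
  refine DirectSum.Decomposition.inductionOn 𝒜
    (motive := fun b => m (m (a ⊗ₜ[ℂ] c) (b ⊗ₜ[ℂ] d)) (e ⊗ₜ[ℂ] f)
      = m (a ⊗ₜ[ℂ] c) (m (b ⊗ₜ[ℂ] d) (e ⊗ₜ[ℂ] f)))
    (by simp) (fun {jb} b' => ?_)
    (fun p₁ p₂ h₁ h₂ => by simp only [add_tmul, map_add, LinearMap.add_apply, h₁, h₂, h₁, h₂]) b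
  beta_reduce
  refine DirectSum.Decomposition.inductionOn 𝒜
    (motive := fun c => m (m (a ⊗ₜ[ℂ] c) ((b' : UEnv t) ⊗ₜ[ℂ] d)) (e ⊗ₜ[ℂ] f)
      = m (a ⊗ₜ[ℂ] c) (m ((b' : UEnv t) ⊗ₜ[ℂ] d) (e ⊗ₜ[ℂ] f)))
    (by simp) (fun {jc} c' => ?_)
    (fun p₁ p₂ h₁ h₂ => by simp only [tmul_add, map_add, LinearMap.add_apply, h₁, h₂, h₁, h₂]) c
  beta_reduce
  refine DirectSum.Decomposition.inductionOn 𝒜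
    (motive := fun d => m (m (a ⊗ₜ[ℂ] (c' : UEnv t)) ((b' : UEnv t) ⊗ₜ[ℂ] d)) (e ⊗ₜ[ℂ] f)
      = m (a ⊗ₜ[ℂ] (c' : UEnv t)) (m ((b' : UEnv t) ⊗ₜ[ℂ] d) (e ⊗ₜ[ℂ] f)))
    (by simp) (fun {jd} d' => ?_)
    (fun p₁ p₂ h₁ h₂ => by simp only [tmul_add, map_add, LinearMap.add_apply, h₁, h₂, h₁, h₂]) d
  beta_reduce
  refine DirectSum.Decomposition.inductionOn 𝒜
    (motive := fun e => m (m (a ⊗ₜ[ℂ] (c' : UEnv t)) ((b' : UEnv t) ⊗ₜ[ℂ] (d' : UEnv t))) (e ⊗ₜ[ℂ] f)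
      = m (a ⊗ₜ[ℂ] (c' : UEnv t)) (m ((b' : UEnv t) ⊗ₜ[ℂ] (d' : UEnv t)) (e ⊗ₜ[ℂ] f)))
    (by simp) (fun {je} e' => ?_)
    (fun p₁ p₂ h₁ h₂ => by simp only [add_tmul, map_add, LinearMap.add_apply, h₁, h₂, h₁, h₂]) e
  beta_reduce
  rw [hm a b' c' d' jb jc b'.2 c'.2, map_smul, LinearMap.smul_apply,
    hm (a * b') e' (c' * d') f je (jc + jd) e'.2 (SetLike.mul_mem_graded c'.2 d'.2),
    hm b' e' d' f je jd e'.2 d'.2, map_smul,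
    hm a (b' * e') c' (d' * f) (jb + je) jc (SetLike.mul_mem_graded b'.2 e'.2) c'.2,
    smul_smul, smul_smul, ← pow_add, ← pow_add, mul_assoc, mul_assoc]
  congr 1
  refine qpow_congr hq3 ?_
  have e1 : (jc + jd).val % 3 = (jc.val + jd.val) % 3 := by rw [ZMod.val_add]; omega
  have e2 : (jb + je).val % 3 = (jb.val + je.val) % 3 := by rw [ZMod.val_add]; omega
  conv_lhs => rw [Nat.add_mod, Nat.mul_mod je.val, e1, ← Nat.mul_mod, ← Nat.add_mod]
  conv_rhs => rw [Nat.add_mod, Nat.mul_mod _ jc.val, e2, ← Nat.mul_mod, ← Nat.add_mod]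
  congr 1
  ring

lemma m_one_mul (hm : IsTwistedMul t 𝒜 q m) (u : UEnv t ⊗[ℂ] UEnv t) :
    m ((1 : UEnv t) ⊗ₜ[ℂ] (1 : UEnv t)) u = u := by
  induction u using TensorProduct.induction_on with
  | zero => simp
  | add x y hx hy => rw [map_add, hx, hy]
  | tmul b d =>
  refine DirectSum.Decomposition.inductionOn 𝒜
    (motive := fun b => m ((1 : UEnv t) ⊗ₜ[ℂ] (1 : UEnv t)) (b ⊗ₜ[ℂ] d) = b ⊗ₜ[ℂ] d)
    (by simp) (fun {j} b' => ?_)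
    (fun x y hx hy => by simp only [add_tmul, map_add, LinearMap.add_apply, hx, hy]) b
  beta_reduce
  rw [hm 1 b' 1 d j 0 b'.2 (SetLike.one_mem_graded 𝒜)]
  simp [ZMod.val_zero]

lemma m_mul_one (hm : IsTwistedMul t 𝒜 q m) (u : UEnv t ⊗[ℂ] UEnv t) :
    m u ((1 : UEnv t) ⊗ₜ[ℂ] (1 : UEnv t)) = u := by
  induction u using TensorProduct.induction_on with
  | zero => simp
  | add x y hx hy => rw [map_add, LinearMap.add_apply, hx, hy]
  | tmul a c =>
  refine DirectSum.Decomposition.inductionOn 𝒜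
    (motive := fun c => m (a ⊗ₜ[ℂ] c) ((1 : UEnv t) ⊗ₜ[ℂ] (1 : UEnv t)) = a ⊗ₜ[ℂ] c)
    (by simp) (fun {k} c' => ?_)
    (fun x y hx hy => by simp only [tmul_add, map_add, LinearMap.add_apply, hx, hy]) c
  beta_reduce
  rw [hm a 1 c' 1 0 k (SetLike.one_mem_graded 𝒜) c'.2]
  simp [ZMod.val_zero]

lemma m_double (hm : IsTwistedMul t 𝒜 q m) (u v : UEnv t) (ju jv : ZMod 3)
    (hu : u ∈ 𝒜 ju) (hv : v ∈ 𝒜 jv) :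
    m (u ⊗ₜ[ℂ] 1 + 1 ⊗ₜ[ℂ] u) (v ⊗ₜ[ℂ] 1 + 1 ⊗ₜ[ℂ] v)
      = (u * v) ⊗ₜ[ℂ] 1 + u ⊗ₜ[ℂ] v + q ^ (jv.val * ju.val) • v ⊗ₜ[ℂ] u
        + 1 ⊗ₜ[ℂ] (u * v) := by
  have h1 : (1 : UEnv t) ∈ 𝒜 0 := SetLike.one_mem_graded 𝒜
  simp only [map_add, LinearMap.add_apply]
  rw [hm u v 1 1 jv 0 hv h1, hm u 1 1 v 0 0 h1 h1, hm 1 v u 1 jv ju hv hu,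
    hm 1 1 u v 0 ju h1 hu]
  simp only [ZMod.val_zero, Nat.mul_zero, Nat.zero_mul, pow_zero, one_smul, mul_one, one_mul]
  abel

lemma m_triple (hm : IsTwistedMul t 𝒜 q m) (u v w : UEnv t)
    (hu : u ∈ 𝒜 1) (hv : v ∈ 𝒜 1) (hw : w ∈ 𝒜 1) :
    m (m (u ⊗ₜ[ℂ] 1 + 1 ⊗ₜ[ℂ] u) (v ⊗ₜ[ℂ] 1 + 1 ⊗ₜ[ℂ] v)) (w ⊗ₜ[ℂ] 1 + 1 ⊗ₜ[ℂ] w)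
      = ((u * v * w) ⊗ₜ[ℂ] 1 + 1 ⊗ₜ[ℂ] (u * v * w))
        + ((u * v) ⊗ₜ[ℂ] w + q • (u * w) ⊗ₜ[ℂ] v + q ^ 2 • (v * w) ⊗ₜ[ℂ] u)
        + (u ⊗ₜ[ℂ] (v * w) + q • v ⊗ₜ[ℂ] (u * w) + q ^ 2 • w ⊗ₜ[ℂ] (u * v)) := by
  have h1 : (1 : UEnv t) ∈ 𝒜 0 := SetLike.one_mem_graded 𝒜
  have huv : u * v ∈ 𝒜 2 := by
    have h := SetLike.mul_mem_graded hu hv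
    rwa [show ((1 : ZMod 3) + 1) = 2 by decide] at h
  rw [m_double t q 𝒜 m hm u v 1 1 hu hv]
  simp only [map_add, LinearMap.add_apply, map_smul, LinearMap.smul_apply]
  rw [hm (u*v) w 1 1 1 0 hw h1, hm (u*v) 1 1 w 0 0 h1 h1,
    hm u w v 1 1 1 hw hv, hm u 1 v w 0 1 h1 hv,
    hm v w u 1 1 1 hw hu, hm v 1 u w 0 1 h1 hu,
    hm 1 w (u*v) 1 1 2 hw huv, hm 1 1 (u*v) w 0 2 h1 huv]
  simp only [ZMod.val_zero, ZMod.val_one, show ((2 : ZMod 3)).val = 2 from rfl,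
    Nat.mul_zero, Nat.zero_mul, Nat.mul_one, Nat.one_mul, pow_zero, pow_one,
    one_smul, mul_one, one_mul, smul_add, smul_smul]
  match_scalars <;> ring

lemma sum_triple (hm : IsTwistedMul t 𝒜 q m) (hq0 : 1 + q + q ^ 2 = 0)
    (Y : Fin 3 → UEnv t) (hY : ∀ i, Y i ∈ 𝒜 1) (Z : UEnv t)
    (hZ : (∑ σ : Equiv.Perm (Fin 3), Y (σ 0) * Y (σ 1) * Y (σ 2)) = Z) :
    (∑ σ : Equiv.Perm (Fin 3),
        m (m (Y (σ 0) ⊗ₜ[ℂ] 1 + 1 ⊗ₜ[ℂ] Y (σ 0)) (Y (σ 1) ⊗ₜ[ℂ] 1 + 1 ⊗ₜ[ℂ] Y (σ 1)))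
          (Y (σ 2) ⊗ₜ[ℂ] 1 + 1 ⊗ₜ[ℂ] Y (σ 2)))
      = Z ⊗ₜ[ℂ] (1 : UEnv t) + (1 : UEnv t) ⊗ₜ[ℂ] Z := by
  rw [Finset.sum_congr rfl (fun σ _ =>
    m_triple t q 𝒜 m hm (Y (σ 0)) (Y (σ 1)) (Y (σ 2)) (hY _) (hY _) (hY _))]
  simp only [Finset.sum_add_distrib]
  rw [← TensorProduct.sum_tmul, ← TensorProduct.tmul_sum, hZ]
  have c1 : (∑ σ : Equiv.Perm (Fin 3), q • (Y (σ 0) * Y (σ 2)) ⊗ₜ[ℂ] Y (σ 1))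
      = q • ∑ σ : Equiv.Perm (Fin 3), (Y (σ 0) * Y (σ 1)) ⊗ₜ[ℂ] Y (σ 2) := by
    rw [Finset.smul_sum]
    exact Fintype.sum_equiv (Equiv.mulRight (Equiv.swap 1 2)) _ _ (fun σ => by
      simp only [Equiv.coe_mulRight, Equiv.Perm.mul_apply,
        show (Equiv.swap (1 : Fin 3) 2) 0 = 0 from by decide,
        show (Equiv.swap (1 : Fin 3) 2) 1 = 2 from by decide,
        show (Equiv.swap (1 : Fin 3) 2) 2 = 1 from by decide])
  have c2 : (∑ σ : Equiv.Perm (Fin 3), q ^ 2 • (Y (σ 1) * Y (σ 2)) ⊗ₜ[ℂ] Y (σ 0))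
      = q ^ 2 • ∑ σ : Equiv.Perm (Fin 3), (Y (σ 0) * Y (σ 1)) ⊗ₜ[ℂ] Y (σ 2) := by
    rw [Finset.smul_sum]
    exact Fintype.sum_equiv (Equiv.mulRight (finRotate 3)) _ _ (fun σ => by
      simp only [Equiv.coe_mulRight, Equiv.Perm.mul_apply,
        show (finRotate 3) 0 = 1 from by decide,
        show (finRotate 3) 1 = 2 from by decide,
        show (finRotate 3) 2 = 0 from by decide])
  have c3 : (∑ σ : Equiv.Perm (Fin 3), q • Y (σ 1) ⊗ₜ[ℂ] (Y (σ 0) * Y (σ 2)))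
      = q • ∑ σ : Equiv.Perm (Fin 3), Y (σ 0) ⊗ₜ[ℂ] (Y (σ 1) * Y (σ 2)) := by
    rw [Finset.smul_sum]
    exact Fintype.sum_equiv (Equiv.mulRight (Equiv.swap 0 1)) _ _ (fun σ => by
      simp only [Equiv.coe_mulRight, Equiv.Perm.mul_apply,
        show (Equiv.swap (0 : Fin 3) 1) 0 = 1 from by decide,
        show (Equiv.swap (0 : Fin 3) 1) 1 = 0 from by decide,
        show (Equiv.swap (0 : Fin 3) 1) 2 = 2 from by decide])
  have c4 : (∑ σ : Equiv.Perm (Fin 3), q ^ 2 • Y (σ 2) ⊗ₜ[ℂ] (Y (σ 0) * Y (σ 1)))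
      = q ^ 2 • ∑ σ : Equiv.Perm (Fin 3), Y (σ 0) ⊗ₜ[ℂ] (Y (σ 1) * Y (σ 2)) := by
    rw [Finset.smul_sum]
    exact Fintype.sum_equiv (Equiv.mulRight (finRotate 3)⁻¹) _ _ (fun σ => by
      simp only [Equiv.coe_mulRight, Equiv.Perm.mul_apply,
        show ((finRotate 3)⁻¹ : Equiv.Perm (Fin 3)) 0 = 2 from by decide,
        show ((finRotate 3)⁻¹ : Equiv.Perm (Fin 3)) 1 = 0 from by decide,
        show ((finRotate 3)⁻¹ : Equiv.Perm (Fin 3)) 2 = 1 from by decide])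
  rw [c1, c2, c3, c4]
  match_scalars
  all_goals first | ring1 | linear_combination hq0

/-- Type synonym for the twisted tensor product. -/
def Tw (t : g₁ →ₗ[ℂ] g₁ →ₗ[ℂ] g₁ →ₗ[ℂ] g₀) : Type _ := UEnv t ⊗[ℂ] UEnv t

noncomputable instance (t : g₁ →ₗ[ℂ] g₁ →ₗ[ℂ] g₁ →ₗ[ℂ] g₀) : AddCommGroup (Tw t) :=
  inferInstanceAs (AddCommGroup (UEnv t ⊗[ℂ] UEnv t))

noncomputable instance (t : g₁ →ₗ[ℂ] g₁ →ₗ[ℂ] g₁ →ₗ[ℂ] g₀) : Module ℂ (Tw t) :=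
  inferInstanceAs (Module ℂ (UEnv t ⊗[ℂ] UEnv t))

end Auxiliary
/-- (Coproduct.) There is a unique `ℂ`-algebra homomorphism
`Δ : U(g) → (U(g) ⊗ U(g), •)` into the twisted tensor product on which every
element of the image of `g₀ ⊕ g₁` is primitive: `Δ(ι z) = ι z ⊗ 1 + 1 ⊗ ι z`. -/
theorem coproduct_exists_unique (t : g₁ →ₗ[ℂ] g₁ →ₗ[ℂ] g₁ →ₗ[ℂ] g₀)
    (hsymm : ∀ y₁ y₂ y₃ : g₁, t y₁ y₂ y₃ = t y₂ y₁ y₃ ∧ t y₁ y₂ y₃ = t y₁ y₃ y₂)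
    (hequiv : ∀ (x : g₀) (y₁ y₂ y₃ : g₁),
      ⁅x, t y₁ y₂ y₃⁆ = t ⁅x, y₁⁆ y₂ y₃ + t y₁ ⁅x, y₂⁆ y₃ + t y₁ y₂ ⁅x, y₃⁆)
    (hfund : ∀ y₁ y₂ y₃ y₄ : g₁,
      ⁅t y₂ y₃ y₄, y₁⁆ + ⁅t y₁ y₃ y₄, y₂⁆ + ⁅t y₁ y₂ y₄, y₃⁆ + ⁅t y₁ y₂ y₃, y₄⁆
        = (0 : g₁))
    (q : ℂ) (hq3 : q ^ 3 = 1) (hq1 : q ≠ 1)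
    (𝒜 : ZMod 3 → Submodule ℂ (UEnv t)) [GradedAlgebra 𝒜]
    (h0 : ∀ x : g₀, envι t ((x, 0) : g₀ × g₁) ∈ 𝒜 0)
    (h1 : ∀ y : g₁, envι t ((0, y) : g₀ × g₁) ∈ 𝒜 1)
    (m : (UEnv t ⊗[ℂ] UEnv t) →ₗ[ℂ] (UEnv t ⊗[ℂ] UEnv t) →ₗ[ℂ]
      (UEnv t ⊗[ℂ] UEnv t))
    (hm : IsTwistedMul t 𝒜 q m) :
    ∃! Δ : UEnv t →ₗ[ℂ] (UEnv t ⊗[ℂ] UEnv t),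
      Δ 1 = (1 : UEnv t) ⊗ₜ[ℂ] (1 : UEnv t) ∧
      (∀ u v : UEnv t, Δ (u * v) = m (Δ u) (Δ v)) ∧
      (∀ z : g₀ × g₁,
        Δ (envι t z) = envι t z ⊗ₜ[ℂ] (1 : UEnv t) + (1 : UEnv t) ⊗ₜ[ℂ] envι t z) := by

  classical
  have hq0 : 1 + q + q ^ 2 = 0 := by
    rcases mul_eq_zero.mp (show (q - 1) * (1 + q + q ^ 2) = 0 by linear_combination hq3) with h | h
    · exact absurd (sub_eq_zero.mp h) hq1
    · exact h
  letI instRing : Ring (Tw t) :=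
    { (inferInstance : AddCommGroup (Tw t)) with
      mul := fun u v => m u v
      natCast := fun n => n • ((1 : UEnv t) ⊗ₜ[ℂ] (1 : UEnv t))
      natCast_zero := zero_nsmul _
      natCast_succ := fun n => succ_nsmul _ n
      intCast := fun n => n • ((1 : UEnv t) ⊗ₜ[ℂ] (1 : UEnv t))
      intCast_ofNat := fun n => natCast_zsmul _ n
      intCast_negSucc := fun n => negSucc_zsmul _ n
      one := (1 : UEnv t) ⊗ₜ[ℂ] (1 : UEnv t)
      left_distrib := fun a b c => map_add (m a) b c
      right_distrib := fun a b c => by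
        show m (a + b) c = m a c + m b c
        exact (LinearMap.congr_fun (map_add m a b) c).trans (LinearMap.add_apply _ _ _)
      zero_mul := fun a => by
        show m 0 a = 0
        rw [map_zero]; rfl
      mul_zero := fun a => map_zero (m a)
      mul_assoc := m_assoc t q 𝒜 m hm hq3
      one_mul := m_one_mul t q 𝒜 m hm
      mul_one := m_mul_one t q 𝒜 m hm }
  letI instAlg : Algebra ℂ (Tw t) :=
    Algebra.ofModule
      (fun r x y => by
        show m (r • x) y = r • m x y
        exact (LinearMap.congr_fun (map_smul m r x) y).trans (LinearMap.smul_apply _ _ _))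
      (fun r x y => map_smul (m x) r y)
  have henvadd : ∀ z w : g₀ × g₁, envι t (z + w) = envι t z + envι t w := fun z w => by
    simp [envι, map_add]
    rfl
  have henvsmul : ∀ (r : ℂ) (z : g₀ × g₁), envι t (r • z) = r • envι t z := fun r z => by
    simp [envι, map_smul]
    rfl
  let eU : (g₀ × g₁) →ₗ[ℂ] UEnv t :=
    (RingQuot.mkAlgHom ℂ (envRel t)).toLinearMap.comp (TensorAlgebra.ι ℂ)
  let L : (g₀ × g₁) →ₗ[ℂ] Tw t :=
    ((TensorProduct.mk ℂ (UEnv t) (UEnv t)).flip 1).comp eU +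
      (TensorProduct.mk ℂ (UEnv t) (UEnv t) 1).comp eU
  let f : TensorAlgebra ℂ (g₀ × g₁) →ₐ[ℂ] Tw t := TensorAlgebra.lift ℂ L
  have hf : ∀ z : g₀ × g₁, f (TensorAlgebra.ι ℂ z)
      = (envι t z ⊗ₜ[ℂ] (1 : UEnv t) + (1 : UEnv t) ⊗ₜ[ℂ] envι t z : UEnv t ⊗[ℂ] UEnv t) :=
    fun z => TensorAlgebra.lift_ι_apply L z
  have hmul_def : ∀ u v : Tw t, u * v = m u v := fun _ _ => rfl
  have hrel : ∀ ⦃a b : TensorAlgebra ℂ (g₀ × g₁)⦄, envRel t a b → f a = f b := by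
    rintro a b (⟨x₁, x₂, rfl, rfl⟩ | ⟨x, y, rfl, rfl⟩ | ⟨y, rfl, rfl⟩)
    · rw [map_mul, map_add, map_mul, hf, hf, hf]; erw [hmul_def, hmul_def]
      rw [m_double t q 𝒜 m hm _ _ 0 0 (h0 x₁) (h0 x₂),
        m_double t q 𝒜 m hm _ _ 0 0 (h0 x₂) (h0 x₁), env_rel1 t x₁ x₂]
      simp only [ZMod.val_zero, Nat.mul_zero, pow_zero, one_smul, add_tmul, tmul_add]
      abel
    · rw [map_mul, map_add, map_mul, hf, hf, hf]; erw [hmul_def, hmul_def]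
      rw [m_double t q 𝒜 m hm _ _ 0 1 (h0 x) (h1 y),
        m_double t q 𝒜 m hm _ _ 1 0 (h1 y) (h0 x), env_rel2 t x y]
      simp only [ZMod.val_zero, ZMod.val_one, Nat.mul_zero, Nat.zero_mul, pow_zero,
        one_smul, add_tmul, tmul_add]
      abel
    · simp only [map_sum, map_mul, hf, hmul_def]
      exact sum_triple t q 𝒜 m hm hq0 (fun i => envι t ((0, y i) : g₀ × g₁))
        (fun i => h1 (y i)) _ (env_rel3 t y)
  let Δalg : UEnv t →ₐ[ℂ] Tw t := RingQuot.liftAlgHom ℂ ⟨f, hrel⟩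
  have hΔι : ∀ z : g₀ × g₁,
      Δalg (envι t z) = envι t z ⊗ₜ[ℂ] (1 : UEnv t) + (1 : UEnv t) ⊗ₜ[ℂ] envι t z := fun z =>
    (RingQuot.liftAlgHom_mkAlgHom_apply ℂ f hrel (TensorAlgebra.ι ℂ z)).trans (hf z)
  let ΔL : UEnv t →ₗ[ℂ] (UEnv t ⊗[ℂ] UEnv t) :=
    { toFun := fun u => (Δalg u : UEnv t ⊗[ℂ] UEnv t)
      map_add' := fun a b => map_add Δalg a b
      map_smul' := fun r a => map_smul Δalg r a }
  have p1 : ΔL 1 = (1 : UEnv t) ⊗ₜ[ℂ] (1 : UEnv t) := map_one Δalg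
  have p2 : ∀ u v : UEnv t, ΔL (u * v) = m (ΔL u) (ΔL v) := fun u v => map_mul Δalg u v
  have p3 : ∀ z : g₀ × g₁,
      ΔL (envι t z) = envι t z ⊗ₜ[ℂ] (1 : UEnv t) + (1 : UEnv t) ⊗ₜ[ℂ] envι t z := hΔι
  refine ⟨ΔL, ⟨p1, p2, p3⟩, ?_⟩
  rintro Δ' ⟨hone, hmul, hgen⟩
  refine LinearMap.ext fun u => ?_
  obtain ⟨a, rfl⟩ := RingQuot.mkAlgHom_surjective ℂ (envRel t) u
  induction a using TensorAlgebra.induction with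
  | algebraMap r =>
    rw [AlgHom.commutes, Algebra.algebraMap_eq_smul_one]; erw [map_smul, map_smul, hone, p1]
  | ι z =>
    rw [show RingQuot.mkAlgHom ℂ (envRel t) (TensorAlgebra.ι ℂ z) = envι t z from rfl,
      hgen, p3]
  | mul a b ha hb =>
    erw [map_mul, hmul, p2, ha, hb]
  | add a b ha hb =>
    erw [map_add, map_add, map_add, ha, hb]
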